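/- Let S ⊆ M be a finset and let L be the list of natural numbers obtained by concatenating the elements of S listed in strictly decreasing order with the elements of M \ S listed in strictly increasing order. Then (-1)^{number of inversions of L} = ksgn_M(S), where an inversion of L is a pair of positions i < j with L(i) > L(j). -/

import Mathlib

open Finset

lemma neg_one_pow_congr' {a b : ℕ} (h : a % 2 = b % 2) : ((-1:ℤ))^a = (-1)^b := by
  conv_lhs => rw [← Nat.div_add_mod a 2]
  conv_rhs => rw [← Nat.div_add_mod b 2]
  rw [h, pow_add, pow_add, pow_mul, pow_mul]
  norm_num

lemma sum_fin_eq_finset_sum (s : Finset ℕ) (l : List ℕ) (hl : l.Perm s.toList)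
    (f : ℕ → ℕ) : ∑ i : Fin l.length, f l[(i:ℕ)] = ∑ a ∈ s, f a := by
  rw [Fin.sum_univ_fun_getElem, (hl.map f).sum_eq, Finset.sum]
  rw [← Finset.coe_toList s, Multiset.map_coe, Multiset.sum_coe]

lemma two_mul_card_pairs {α : Type*} [LinearOrder α] [DecidableEq α] (s : Finset α) :
    2 * ((s ×ˢ s).filter fun p => p.1 < p.2).card + s.card = s.card * s.card := by
  classical
  have hswap : ((s ×ˢ s).filter fun p => p.2 < p.1).card
      = ((s ×ˢ s).filter fun p => p.1 < p.2).card := by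
    apply Finset.card_bij' (fun p _ => Prod.swap p) (fun p _ => Prod.swap p) <;>
      simp +contextual [and_comm]
  have hsplit := Finset.card_filter_add_card_filter_not
    (s := s ×ˢ s) (p := fun p => p.1 < p.2)
  simp only [not_lt] at hsplit
  have hne : ((s ×ˢ s).filter fun p => p.2 ≤ p.1).card
      = ((s ×ˢ s).filter fun p => p.2 < p.1).card + s.card := by
    have h2 := Finset.card_filter_add_card_filter_not
      (s := (s ×ˢ s).filter fun p => p.2 ≤ p.1) (p := fun p => p.2 < p.1)
    simp only [not_lt] at h2
    rw [← h2, Finset.filter_filter, Finset.filter_filter]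
    congr 1
    · apply congrArg
      apply Finset.filter_congr
      intro p _
      constructor
      · exact fun h => h.2
      · exact fun h => ⟨h.le, h⟩
    · rw [← Finset.diag_card (s := s), Finset.diag_eq_filter]
      apply congrArg
      apply Finset.filter_congr
      intro p _
      constructor
      · rintro ⟨h1, h2⟩
        exact le_antisymm h2 h1
      · rintro h
        exact ⟨h.ge, h.le⟩
  rw [hne, hswap] at hsplit
  rw [Finset.card_product] at hsplit
  omega



/-- The cochain-complex sign `ksgn_M(S) = (-1)^{#{p ∈ S : position of p in M is even}}`,
where the position of `p` in `M` is `#{q ∈ M : q ≤ p}`. -/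
def ksgn (M S : Finset ℕ) : ℤ :=
  (-1) ^ (S.filter fun p => Even ((M.filter fun q => q ≤ p).card)).card

/-- If `L` is the concatenation of the elements of `S` in strictly decreasing order with
the elements of `M \ S` in strictly increasing order, then `(-1)^{#inversions of L}`
equals `ksgn_M(S)`, where an inversion is a pair of positions `i < j` with `L i > L j`. -/
theorem inversions_eq_ksgn (M S : Finset ℕ) (hSM : S ⊆ M) (L : List ℕ)
    (hL : L = (S.sort (· ≤ ·)).reverse ++ (M \ S).sort (· ≤ ·)) :
    (-1 : ℤ) ^ (Finset.univ.filter fun p : Fin L.length × Fin L.length =>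
        p.1 < p.2 ∧ L.get p.2 < L.get p.1).card = ksgn M S := by
  classical
  subst hL
  set A := (S.sort (· ≤ ·)).reverse with hA
  set B := (M \ S).sort (· ≤ ·) with hBdef
  have hAperm : A.Perm S.toList :=
    ((S.sort (· ≤ ·)).reverse_perm).trans (Finset.sort_perm_toList _ _)
  have hBperm : B.Perm (M \ S).toList := Finset.sort_perm_toList _ _
  have hAlen : A.length = S.card := by rw [hAperm.length_eq, Finset.length_toList]
  have hAsorted : A.Pairwise (· > ·) := by
    rw [hA, List.pairwise_reverse]
    exact (Finset.sortedLT_sort S).pairwise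
  have hBsorted : B.Pairwise (· < ·) := (Finset.sortedLT_sort _).pairwise
  have hAmono : ∀ i j : Fin A.length, i < j → A[(j:ℕ)] < A[(i:ℕ)] := by
    intro i j h
    simpa [List.get_eq_getElem] using hAsorted.rel_get_of_lt h
  have hBmono : ∀ i j : Fin B.length, i < j → B[(i:ℕ)] < B[(j:ℕ)] := by
    intro i j h
    simpa [List.get_eq_getElem] using hBsorted.rel_get_of_lt h
  have hlen : (A ++ B).length = A.length + B.length := List.length_append
  set e : Fin A.length ⊕ Fin B.length ≃ Fin (A ++ B).length :=
    finSumFinEquiv.trans (finCongr hlen.symm) with he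
  have hvl : ∀ i : Fin A.length, ((e (Sum.inl i)) : ℕ) = (i:ℕ) := by
    intro i; simp [he]
  have hvr : ∀ j : Fin B.length, ((e (Sum.inr j)) : ℕ) = A.length + (j:ℕ) := by
    intro j; simp [he]
  have hgl : ∀ i : Fin A.length, (A ++ B).get (e (Sum.inl i)) = A[(i:ℕ)] := by
    intro i
    simp only [List.get_eq_getElem, hvl]
    rw [List.getElem_append_left]
  have hgr : ∀ j : Fin B.length, (A ++ B).get (e (Sum.inr j)) = B[(j:ℕ)] := by
    intro j
    simp only [List.get_eq_getElem, hvr]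
    rw [List.getElem_append_right] <;> simp
  set X := ((univ ×ˢ univ).filter fun p : Fin A.length × Fin A.length => p.1 < p.2).card with hX
  set C := ∑ a ∈ S, ((M \ S).filter (· < a)).card with hC
  have key : (Finset.univ.filter fun p : Fin (A ++ B).length × Fin (A ++ B).length =>
      p.1 < p.2 ∧ (A ++ B).get p.2 < (A ++ B).get p.1).card = X + C := by
    rw [Finset.card_filter]
    rw [Fintype.sum_prod_type]
    have hsplit : ∀ g : Fin (A ++ B).length → ℕ,
        ∑ i, g i = (∑ i : Fin A.length, g (e (Sum.inl i)))
          + ∑ j : Fin B.length, g (e (Sum.inr j)) := by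
      intro g
      rw [← Equiv.sum_comp e g, Fintype.sum_sum_type]
    rw [hsplit]
    have h11 : ∀ i : Fin A.length,
        (∑ j, if e (Sum.inl i) < j ∧ (A ++ B).get j < (A ++ B).get (e (Sum.inl i)) then 1 else 0)
        = (∑ j : Fin A.length, if i < j then 1 else 0)
          + ∑ j : Fin B.length, if B[(j:ℕ)] < A[(i:ℕ)] then 1 else 0 := by
      intro i
      rw [hsplit]
      congr 1
      · apply Finset.sum_congr rfl
        intro j _
        apply if_congr _ rfl rfl
        rw [Fin.lt_def, hvl, hvl, hgl, hgl, ← Fin.lt_def]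
        constructor
        · exact And.left
        · exact fun h => ⟨h, hAmono i j h⟩
      · apply Finset.sum_congr rfl
        intro j _
        apply if_congr _ rfl rfl
        rw [Fin.lt_def, hvl, hvr, hgl, hgr]
        constructor
        · exact And.right
        · exact fun h => ⟨lt_of_lt_of_le i.isLt (Nat.le_add_right _ _), h⟩
    have h2 : ∀ j : Fin B.length,
        (∑ i, if e (Sum.inr j) < i ∧ (A ++ B).get i < (A ++ B).get (e (Sum.inr j)) then 1 else 0)
        = 0 := by
      intro j
      rw [hsplit]
      rw [Finset.sum_eq_zero, Finset.sum_eq_zero]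
      · simp
      · intro i _
        apply if_neg
        rintro ⟨h1, h2⟩
        rw [Fin.lt_def, hvr, hvr] at h1
        have hij : j < i := by omega
        exact absurd h2 (by rw [hgr, hgr]; exact not_lt.2 (hBmono j i hij).le)
      · intro i _
        apply if_neg
        rintro ⟨h1, _⟩
        rw [Fin.lt_def, hvr, hvl] at h1
        have := i.isLt
        omega
    rw [Finset.sum_congr rfl fun i _ => h11 i, Finset.sum_congr rfl fun j _ => h2 j]
    rw [Finset.sum_add_distrib, Finset.sum_const, smul_eq_mul, mul_zero, add_zero]
    congr 1
    · rw [hX, Finset.card_filter, Finset.sum_product]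
    · rw [hC]
      have hinner : ∀ i : Fin A.length,
          (∑ j : Fin B.length, if B[(j:ℕ)] < A[(i:ℕ)] then 1 else 0)
          = ((M \ S).filter (· < A[(i:ℕ)])).card := by
        intro i
        rw [sum_fin_eq_finset_sum (M \ S) B hBperm (fun q => if q < A[(i:ℕ)] then 1 else 0)]
        rw [Finset.card_filter]
      rw [Finset.sum_congr rfl fun i _ => hinner i]
      exact sum_fin_eq_finset_sum S A hAperm (fun a => ((M \ S).filter (· < a)).card)
  rw [key]
  -- now the parity argument
  set s := S.card with hs
  set E := (S.filter fun p => Even ((M.filter fun q => q ≤ p).card)).card with hE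
  set O := (S.filter fun p => ¬ Even ((M.filter fun q => q ≤ p).card)).card with hO
  have hEO : E + O = s := Finset.card_filter_add_card_filter_not _
  set Y := ((S ×ˢ S).filter fun p => p.1 < p.2).card with hY
  have hXX : 2 * X + s = s * s := by
    have h := two_mul_card_pairs (univ : Finset (Fin A.length))
    have hcardu : (univ : Finset (Fin A.length)).card = s := by
      rw [Finset.card_univ, Fintype.card_fin, hAlen]
    rw [hcardu] at h
    rw [hX]
    convert h using 4
  have hYY : 2 * Y + s = s * s := two_mul_card_pairs S
  have hYsum : ∑ a ∈ S, (S.filter (· < a)).card = Y := by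
    rw [hY, Finset.card_filter, Finset.sum_product_right]
    apply Finset.sum_congr rfl
    intro a _
    rw [Finset.card_filter]
  have hr : ∀ a ∈ S, (S.filter (· ≤ a)).card = (S.filter (· < a)).card + 1 := by
    intro a ha
    have : S.filter (· ≤ a) = (S.filter (· < a)) ∪ {a} := by
      ext q
      simp only [Finset.mem_filter, Finset.mem_union, Finset.mem_singleton]
      constructor
      · rintro ⟨hq, hle⟩
        rcases lt_or_eq_of_le hle with h | h
        · exact Or.inl ⟨hq, h⟩
        · exact Or.inr h
      · rintro (⟨hq, hlt⟩ | rfl)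
        · exact ⟨hq, hlt.le⟩
        · exact ⟨ha, le_refl _⟩
    rw [this, Finset.card_union_of_disjoint, Finset.card_singleton]
    simp only [Finset.disjoint_singleton_right, Finset.mem_filter]
    rintro ⟨_, h⟩
    exact absurd rfl h.ne
  have hpos : ∀ a ∈ S, (M.filter fun q => q ≤ a).card
      = (S.filter (· ≤ a)).card + ((M \ S).filter (· < a)).card := by
    intro a ha
    have hsp : M.filter (fun q => q ≤ a)
        = S.filter (fun q => q ≤ a) ∪ (M \ S).filter (fun q => q < a) := by
      ext q
      simp only [Finset.mem_filter, Finset.mem_union, Finset.mem_sdiff]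
      constructor
      · rintro ⟨hqM, hle⟩
        by_cases hqS : q ∈ S
        · exact Or.inl ⟨hqS, hle⟩
        · refine Or.inr ⟨⟨hqM, hqS⟩, ?_⟩
          rcases lt_or_eq_of_le hle with h | rfl
          · exact h
          · exact absurd ha hqS
      · rintro (⟨hqS, hle⟩ | ⟨⟨hqM, _⟩, hlt⟩)
        · exact ⟨hSM hqS, hle⟩
        · exact ⟨hqM, hlt.le⟩
    rw [hsp, Finset.card_union_of_disjoint]
    exact Finset.disjoint_filter_filter Finset.disjoint_sdiff
  have hsum : (∑ a ∈ S, (M.filter fun q => q ≤ a).card) % 2 = O % 2 := by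
    rw [Finset.sum_nat_mod]
    have h1 : ∑ a ∈ S, (M.filter fun q => q ≤ a).card % 2
        = ∑ a ∈ S, (if Even ((M.filter fun q => q ≤ a).card) then 0 else 1) := by
      apply Finset.sum_congr rfl
      intro a _
      rcases Nat.even_or_odd ((M.filter fun q => q ≤ a).card) with h | h
      · rw [if_pos h, Nat.even_iff.mp h]
      · rw [if_neg (Nat.not_even_iff_odd.mpr h), Nat.odd_iff.mp h]
    have h2 : ∑ a ∈ S, (if Even ((M.filter fun q => q ≤ a).card) then 0 else 1) = O := by
      rw [hO, Finset.card_filter]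
      apply Finset.sum_congr rfl
      intro a _
      rw [ite_not]
    rw [h1, h2]
  have hposum : ∑ a ∈ S, (M.filter fun q => q ≤ a).card = Y + s + C := by
    rw [Finset.sum_congr rfl hpos, Finset.sum_add_distrib,
      Finset.sum_congr rfl hr, Finset.sum_add_distrib, hYsum, Finset.sum_const,
      smul_eq_mul, mul_one, hC]
  have h5 : (Y + s + C) % 2 = O % 2 := hposum ▸ hsum
  have hXY : X = Y := by
    have h := hXX.trans hYY.symm
    omega
  unfold ksgn
  apply neg_one_pow_congr'
  omega
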